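/- Let n ≥ 4, p ≥ 1, θ0 = (1/√n,…,1/√n), and let X be a random vector uniformly distributed on P_{θ0^⊥}B_p^n. Define f(η1,η2) = E[⟨X,η1⟩²⟨X,η2⟩²] − E[⟨X,η1⟩²]·E[⟨X,η2⟩²], and set ξ1 = (e1−e2+e3−e4)/2, ξ2 = (e1−e2−e3+e4)/2, ξ̄1 = (e1−e2)/√2, ξ̄2 = (e3−e4)/√2 ∈ S^{n−1} ∩ θ0^⊥. Then for every pair of orthonormal vectors η1, η2 ∈ S^{n−1} ∩ θ0^⊥, f(η1,η2) = f(ξ̄1,ξ̄2) + 4·(f(ξ1,ξ2) − f(ξ̄1,ξ̄2)) · Σ_{i=1}^n η1(i)² η2(i)². -/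

import Mathlib

open MeasureTheory Real
open scoped RealInnerProductSpace ENNReal

noncomputable section

/-- `ℝⁿ` with the Euclidean structure. -/
abbrev E (n : ℕ) := EuclideanSpace ℝ (Fin n)

/-- The unit ball of the `ℓ_p` norm on `ℝⁿ`. -/
def lpBall (n : ℕ) (p : ℝ) : Set (E n) := {x | ∑ i, |x i| ^ p ≤ 1}

/-- `f(η₁,η₂) = E⟨X,η₁⟩²⟨X,η₂⟩² - E⟨X,η₁⟩² E⟨X,η₂⟩²` for `X` distributed according to `μ`. -/
def covf {n : ℕ} (μ : Measure (E n)) (a b : E n) : ℝ :=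
  (∫ x, ⟪x, a⟫ ^ 2 * ⟪x, b⟫ ^ 2 ∂μ) - (∫ x, ⟪x, a⟫ ^ 2 ∂μ) * (∫ x, ⟪x, b⟫ ^ 2 ∂μ)

/-- The canonical basis vectors of `ℝⁿ`. -/
def stdb {n : ℕ} (i : Fin n) : E n := EuclideanSpace.single i 1

/-- The diagonal unit vector `θ₀ = (1/√n, …, 1/√n)`. -/
def theta0 (n : ℕ) : E n := (WithLp.equiv 2 (Fin n → ℝ)).symm (fun _ => (Real.sqrt n)⁻¹)

/-- The orthogonal projection onto the hyperplane `θ⊥` (for a unit vector `θ`). -/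
def projPerp {n : ℕ} (θ : E n) (x : E n) : E n := x - ⟪x, θ⟫ • θ

/-- The uniform probability measure on a set `K ⊆ ℝⁿ`, given by the normalized `d`-dimensional
Hausdorff measure. -/
def unifH {n : ℕ} (d : ℝ) (K : Set (E n)) : Measure (E n) :=
  (μH[d] K)⁻¹ • (μH[d]).restrict K

/-- The uniform probability measure on the hyperplane projection `P_{θ₀⊥} B_p^n`, given by the
normalized `(n-1)`-dimensional Hausdorff measure. -/
def unifProj (n : ℕ) (p : ℝ) : Measure (E n) :=
  unifH ((n : ℝ) - 1) (projPerp (theta0 n) '' lpBall n p)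

section Aux

open Function Finset

set_option linter.unusedTactic false
set_option linter.unreachableTactic false
set_option linter.unnecessarySeqFocus false

lemma exists_perm_comp {α β : Type*} [Fintype α] [Fintype β] [DecidableEq α] [DecidableEq β]
    (v w : α → β) (hv : Injective v) (hw : Injective w) :
    ∃ σ : Equiv.Perm β, ∀ t, σ (v t) = w t := by
  classical
  have hcard : Fintype.card {x // ¬ x ∈ Set.range v} = Fintype.card {x // ¬ x ∈ Set.range w} := by
    rw [Fintype.card_subtype_compl, Fintype.card_subtype_compl,
      ← Fintype.card_congr (Equiv.ofInjective v hv), ← Fintype.card_congr (Equiv.ofInjective w hw)]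
  let e : {x // x ∈ Set.range v} ≃ {x // x ∈ Set.range w} :=
    (Equiv.ofInjective v hv).symm.trans (Equiv.ofInjective w hw)
  let f : {x // ¬ x ∈ Set.range v} ≃ {x // ¬ x ∈ Set.range w} := Fintype.equivOfCardEq hcard
  refine ⟨Equiv.subtypeCongr e f, fun t => ?_⟩
  have hmem : v t ∈ Set.range v := ⟨t, rfl⟩
  have h1 : Equiv.subtypeCongr e f (v t) = e ⟨v t, hmem⟩ := by
    simp [Equiv.subtypeCongr, hmem]
  rw [h1]
  have h2 : (⟨v t, hmem⟩ : {x // x ∈ Set.range v}) = Equiv.ofInjective v hv t := rfl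
  rw [h2]
  simp only [e, Equiv.trans_apply, Equiv.symm_apply_apply, Equiv.ofInjective_apply,
    Equiv.ofInjective_symm_apply]

lemma inj2 {n : ℕ} {x y : Fin n} (h : x ≠ y) : Injective ![x, y] := by
  intro a b hab; fin_cases a <;> fin_cases b <;> simp_all
lemma inj3 {n : ℕ} {x y z : Fin n} (h1 : x ≠ y) (h2 : x ≠ z) (h3 : y ≠ z) :
    Injective ![x, y, z] := by
  intro a b hab; fin_cases a <;> fin_cases b <;> simp_all
lemma inj4 {n : ℕ} {x y z u : Fin n} (h1 : x ≠ y) (h2 : x ≠ z) (h3 : x ≠ u) (h4 : y ≠ z)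
    (h5 : y ≠ u) (h6 : z ≠ u) : Injective ![x, y, z, u] := by
  intro a b hab; fin_cases a <;> fin_cases b <;> simp_all

section
variable {n : ℕ} (m : Fin n → Fin n → Fin n → Fin n → ℝ)

lemma moment_structure (hn : 4 ≤ n)
    (hperm : ∀ (σ : Equiv.Perm (Fin n)) i j k l, m (σ i) (σ j) (σ k) (σ l) = m i j k l)
    (h12 : ∀ i j k l, m i j k l = m j i k l)
    (h23 : ∀ i j k l, m i j k l = m i k j l)
    (h34 : ∀ i j k l, m i j k l = m i j l k) :
    ∀ i j k l, m i j k l =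
      m (⟨0, by linarith⟩ : Fin n) ⟨1, by linarith⟩ ⟨2, by linarith⟩ ⟨3, by linarith⟩
      + (m (⟨0, by linarith⟩ : Fin n) ⟨0, by linarith⟩ ⟨1, by linarith⟩ ⟨2, by linarith⟩
          - m (⟨0, by linarith⟩ : Fin n) ⟨1, by linarith⟩ ⟨2, by linarith⟩ ⟨3, by linarith⟩) *
        ((if i = j then (1:ℝ) else 0) + (if i = k then (1:ℝ) else 0)
          + (if i = l then (1:ℝ) else 0) + (if j = k then (1:ℝ) else 0)
          + (if j = l then (1:ℝ) else 0) + (if k = l then (1:ℝ) else 0))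
      + (m (⟨0, by linarith⟩ : Fin n) ⟨0, by linarith⟩ ⟨1, by linarith⟩ ⟨1, by linarith⟩
          - 2 * m (⟨0, by linarith⟩ : Fin n) ⟨0, by linarith⟩ ⟨1, by linarith⟩ ⟨2, by linarith⟩
          + m (⟨0, by linarith⟩ : Fin n) ⟨1, by linarith⟩ ⟨2, by linarith⟩ ⟨3, by linarith⟩) *
        ((if i = j then (1:ℝ) else 0) * (if k = l then (1:ℝ) else 0)
          + (if i = k then (1:ℝ) else 0) * (if j = l then (1:ℝ) else 0)
          + (if i = l then (1:ℝ) else 0) * (if j = k then (1:ℝ) else 0))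
      + (m (⟨0, by linarith⟩ : Fin n) ⟨0, by linarith⟩ ⟨0, by linarith⟩ ⟨1, by linarith⟩
          - 3 * m (⟨0, by linarith⟩ : Fin n) ⟨0, by linarith⟩ ⟨1, by linarith⟩ ⟨2, by linarith⟩
          + 2 * m (⟨0, by linarith⟩ : Fin n) ⟨1, by linarith⟩ ⟨2, by linarith⟩ ⟨3, by linarith⟩) *
        ((if i = j then (1:ℝ) else 0) * (if i = k then (1:ℝ) else 0)
          + (if i = j then (1:ℝ) else 0) * (if i = l then (1:ℝ) else 0)
          + (if i = k then (1:ℝ) else 0) * (if i = l then (1:ℝ) else 0)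
          + (if j = k then (1:ℝ) else 0) * (if j = l then (1:ℝ) else 0))
      + (m (⟨0, by linarith⟩ : Fin n) ⟨0, by linarith⟩ ⟨0, by linarith⟩ ⟨0, by linarith⟩
          - 3 * m (⟨0, by linarith⟩ : Fin n) ⟨0, by linarith⟩ ⟨1, by linarith⟩ ⟨1, by linarith⟩
          - 4 * m (⟨0, by linarith⟩ : Fin n) ⟨0, by linarith⟩ ⟨0, by linarith⟩ ⟨1, by linarith⟩
          + 12 * m (⟨0, by linarith⟩ : Fin n) ⟨0, by linarith⟩ ⟨1, by linarith⟩ ⟨2, by linarith⟩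
          - 6 * m (⟨0, by linarith⟩ : Fin n) ⟨1, by linarith⟩ ⟨2, by linarith⟩ ⟨3, by linarith⟩) *
        ((if i = j then (1:ℝ) else 0) * (if i = k then (1:ℝ) else 0)
          * (if i = l then (1:ℝ) else 0)) := by
  set i0 : Fin n := ⟨0, by linarith⟩ with hi0
  set i1 : Fin n := ⟨1, by linarith⟩ with hi1
  set i2 : Fin n := ⟨2, by linarith⟩ with hi2
  set i3 : Fin n := ⟨3, by linarith⟩ with hi3
  have d01 : i0 ≠ i1 := by simp [hi0, hi1, Fin.ext_iff]
  have d02 : i0 ≠ i2 := by simp [hi0, hi2, Fin.ext_iff]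
  have d03 : i0 ≠ i3 := by simp [hi0, hi3, Fin.ext_iff]
  have d12 : i1 ≠ i2 := by simp [hi1, hi2, Fin.ext_iff]
  have d13 : i1 ≠ i3 := by simp [hi1, hi3, Fin.ext_iff]
  have d23 : i2 ≠ i3 := by simp [hi2, hi3, Fin.ext_iff]
  have pat4 : ∀ i : Fin n, m i i i i = m i0 i0 i0 i0 := by
    intro i
    obtain ⟨σ, hσ⟩ := exists_perm_comp ![i] ![i0] (fun a b _ => Subsingleton.elim a b)
      (fun a b _ => Subsingleton.elim a b)
    have h0 := hσ 0
    simp only [Matrix.cons_val_zero] at h0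
    rw [← hperm σ i i i i, h0]
  have pat31 : ∀ i j : Fin n, i ≠ j → m i i i j = m i0 i0 i0 i1 := by
    intro i j hij
    obtain ⟨σ, hσ⟩ := exists_perm_comp ![i, j] ![i0, i1] (inj2 hij) (inj2 d01)
    have h0 := hσ 0; have h1 := hσ 1
    simp only [Matrix.cons_val_zero, Matrix.cons_val_one, Matrix.head_cons] at h0 h1
    rw [← hperm σ i i i j, h0, h1]
  have pat22 : ∀ i j : Fin n, i ≠ j → m i i j j = m i0 i0 i1 i1 := by
    intro i j hij
    obtain ⟨σ, hσ⟩ := exists_perm_comp ![i, j] ![i0, i1] (inj2 hij) (inj2 d01)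
    have h0 := hσ 0; have h1 := hσ 1
    simp only [Matrix.cons_val_zero, Matrix.cons_val_one, Matrix.head_cons] at h0 h1
    rw [← hperm σ i i j j, h0, h1]
  have pat211 : ∀ i j k : Fin n, i ≠ j → i ≠ k → j ≠ k → m i i j k = m i0 i0 i1 i2 := by
    intro i j k hij hik hjk
    obtain ⟨σ, hσ⟩ := exists_perm_comp ![i, j, k] ![i0, i1, i2] (inj3 hij hik hjk)
      (inj3 d01 d02 d12)
    have h0 := hσ 0; have h1 := hσ 1; have h2 := hσ 2
    simp only [Matrix.cons_val_zero, Matrix.cons_val_one, Matrix.head_cons,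
      Matrix.cons_val_two, Matrix.tail_cons] at h0 h1 h2
    rw [← hperm σ i i j k, h0, h1, h2]
  have pat1111 : ∀ i j k l : Fin n, i ≠ j → i ≠ k → i ≠ l → j ≠ k → j ≠ l → k ≠ l →
      m i j k l = m i0 i1 i2 i3 := by
    intro i j k l hij hik hil hjk hjl hkl
    obtain ⟨σ, hσ⟩ := exists_perm_comp ![i, j, k, l] ![i0, i1, i2, i3]
      (inj4 hij hik hil hjk hjl hkl) (inj4 d01 d02 d03 d12 d13 d23)
    have h0 := hσ 0; have h1 := hσ 1; have h2 := hσ 2; have h3 := hσ 3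
    simp only [Matrix.cons_val_zero, Matrix.cons_val_one, Matrix.head_cons,
      Matrix.cons_val_two, Matrix.tail_cons, Matrix.cons_val_three] at h0 h1 h2 h3
    rw [← hperm σ i j k l, h0, h1, h2, h3]
  intro i j k l
  by_cases hij : i = j
  · subst hij
    by_cases hkl : k = l
    · subst hkl
      by_cases hik : i = k
      · subst hik
        rw [pat4 i]
        simp <;> ring
      · rw [pat22 i k hik]
        simp [hik] <;> ring
    · by_cases hik : i = k
      · subst hik
        have hil : i ≠ l := hkl
        rw [pat31 i l hil]
        simp [hil] <;> ring
      · by_cases hil : i = l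
        · subst hil
          rw [h34 i i k i, pat31 i k hik]
          simp [hik, hkl, Ne.symm hkl] <;> ring
        · rw [pat211 i k l hik hil hkl]
          simp [hik, hil, hkl] <;> ring
  · by_cases hkl : k = l
    · subst hkl
      by_cases hik : i = k
      · subst hik
        rw [h23 i j i i, h34 i i j i, pat31 i j hij]
        simp [hij, Ne.symm hij] <;> ring
      · by_cases hjk : j = k
        · subst hjk
          rw [h12 i j j j, h23 j i j j, h34 j j i j, pat31 j i (Ne.symm hij)]
          simp [hij, hik, Ne.symm hij, Ne.symm hik] <;> ring
        · rw [h23 i j k k, h12 i k j k, h34 k i j k, h23 k i k j,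
            pat211 k i j (Ne.symm hik) (Ne.symm hjk) hij]
          simp [hij, hik, hjk, Ne.symm hij, Ne.symm hik, Ne.symm hjk] <;> ring
    · by_cases hik : i = k
      · subst hik
        by_cases hjl : j = l
        · subst hjl
          rw [h23 i j i j, pat22 i j hij]
          simp [hij, Ne.symm hij, hkl] <;> ring
        · rw [h23 i j i l, pat211 i j l hij hkl hjl]
          simp [hij, hjl, hkl, Ne.symm hij, Ne.symm hjl, Ne.symm hkl] <;> ring
      · by_cases hil : i = l
        · subst hil
          by_cases hjk : j = k
          · subst hjk
            rw [h34 i j j i, h23 i j i j, pat22 i j hij]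
            simp [hij, Ne.symm hij] <;> ring
          · rw [h34 i j k i, h23 i j i k, pat211 i j k hij hik hjk]
            simp [hij, hik, hjk, hkl, Ne.symm hij, Ne.symm hik, Ne.symm hjk, Ne.symm hkl] <;> ring
        · by_cases hjk : j = k
          · subst hjk
            rw [h12 i j j l, h23 j i j l, pat211 j i l (Ne.symm hij) hkl hil]
            simp [hij, hik, hil, hkl, Ne.symm hij, Ne.symm hik, Ne.symm hil, Ne.symm hkl] <;> ring
          · by_cases hjl : j = l
            · subst hjl
              rw [h34 i j k j, h12 i j j k, h23 j i j k,
                pat211 j i k (Ne.symm hij) hjk hik]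
              simp [hij, hik, hjk, hkl, Ne.symm hij, Ne.symm hik, Ne.symm hjk, Ne.symm hkl] <;> ring
            · rw [pat1111 i j k l hij hik hil hjk hjl hkl]
              simp [hij, hik, hil, hjk, hjl, hkl, Ne.symm hij, Ne.symm hik, Ne.symm hil,
                Ne.symm hjk, Ne.symm hjl, Ne.symm hkl] <;> ring
end


lemma quad_sum {n : ℕ} (m : Fin n → Fin n → Fin n → Fin n → ℝ) (c0 c1 c2 c3 c4 : ℝ)
    (hφ : ∀ i j k l, m i j k l = c0
      + c1 * ((if i = j then (1:ℝ) else 0) + (if i = k then (1:ℝ) else 0)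
        + (if i = l then (1:ℝ) else 0) + (if j = k then (1:ℝ) else 0)
        + (if j = l then (1:ℝ) else 0) + (if k = l then (1:ℝ) else 0))
      + c2 * ((if i = j then (1:ℝ) else 0) * (if k = l then (1:ℝ) else 0)
        + (if i = k then (1:ℝ) else 0) * (if j = l then (1:ℝ) else 0)
        + (if i = l then (1:ℝ) else 0) * (if j = k then (1:ℝ) else 0))
      + c3 * ((if i = j then (1:ℝ) else 0) * (if i = k then (1:ℝ) else 0)
        + (if i = j then (1:ℝ) else 0) * (if i = l then (1:ℝ) else 0)
        + (if i = k then (1:ℝ) else 0) * (if i = l then (1:ℝ) else 0)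
        + (if j = k then (1:ℝ) else 0) * (if j = l then (1:ℝ) else 0))
      + c4 * ((if i = j then (1:ℝ) else 0) * (if i = k then (1:ℝ) else 0)
        * (if i = l then (1:ℝ) else 0)))
    (a b : Fin n → ℝ) (ha1 : ∑ i, a i = 0) (hb1 : ∑ i, b i = 0)
    (ha2 : ∑ i, a i * a i = 1) (hb2 : ∑ i, b i * b i = 1)
    (hab : ∑ i, a i * b i = 0) :
    ∑ i, ∑ j, ∑ k, ∑ l, (a i * a j * b k * b l) * m i j k l
      = c2 + c4 * ∑ i, (a i * a i) * (b i * b i) := by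
  simp only [hφ]
  simp only [mul_add, add_mul, mul_ite, ite_mul, mul_one, mul_zero, zero_mul, one_mul,
    Finset.sum_add_distrib, Finset.sum_ite_irrel, Finset.sum_ite_eq, Finset.sum_ite_eq',
    Finset.mem_univ, if_true, Finset.sum_const_zero, ← Finset.sum_mul, ← Finset.mul_sum,
    ha1, hb1, ha2, hb2, hab]
  have E1 : ∑ i : Fin n, ∑ j : Fin n, ∑ k : Fin n, a i * a j * b k * b k = 0 := by
    have h : ∀ i j : Fin n, ∑ k, a i * a j * b k * b k = a i * a j * ∑ k, b k * b k := by
      intro i j; rw [Finset.mul_sum]; exact Finset.sum_congr rfl fun k _ => by ring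
    simp only [h, hb2, mul_one, ← Finset.mul_sum, ha1, mul_zero, Finset.sum_const_zero]
  have E2 : ∑ i : Fin n, ∑ j : Fin n, a i * a i * b j * b j = 1 := by
    have h : ∀ i : Fin n, ∑ j, a i * a i * b j * b j = a i * a i * ∑ j, b j * b j := by
      intro i; rw [Finset.mul_sum]; exact Finset.sum_congr rfl fun k _ => by ring
    simp only [h, hb2, mul_one, ha2]
  have E3 : ∑ i : Fin n, ∑ j : Fin n, a i * a j * b i * b j = 0 := by
    have h : ∀ i : Fin n, ∑ j, a i * a j * b i * b j = (a i * b i) * ∑ j, a j * b j := by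
      intro i; rw [Finset.mul_sum]; exact Finset.sum_congr rfl fun k _ => by ring
    simp only [h, hab, mul_zero, Finset.sum_const_zero]
  have E4 : ∑ i : Fin n, (∑ j : Fin n, a i * a j * b j) * b i = 0 := by
    have h : ∀ i : Fin n, (∑ j, a i * a j * b j) * b i = (a i * b i) * ∑ j, a j * b j := by
      intro i; rw [Finset.sum_mul, Finset.mul_sum]; exact Finset.sum_congr rfl fun k _ => by ring
    simp only [h, hab, mul_zero, Finset.sum_const_zero]
  have E5 : ∑ i : Fin n, ∑ j : Fin n, a i * a j * b j * b j = 0 := by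
    have h : ∀ i : Fin n, ∑ j, a i * a j * b j * b j = a i * ∑ j, a j * (b j * b j) := by
      intro i; rw [Finset.mul_sum]; exact Finset.sum_congr rfl fun k _ => by ring
    simp only [h, ← Finset.sum_mul, ha1, zero_mul]
  have E6 : ∑ i : Fin n, a i * a i * b i * b i = ∑ i : Fin n, a i * a i * (b i * b i) :=
    Finset.sum_congr rfl fun k _ => by ring
  rw [E1, E2, E3, E4, E5, E6]
  ring


variable {n : ℕ}

/-- coordinate permutation isometry: `(permIso σ x) i = x (σ i)`. -/
def permIso (σ : Equiv.Perm (Fin n)) : E n ≃ₗᵢ[ℝ] E n :=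
  LinearIsometryEquiv.piLpCongrLeft 2 ℝ ℝ σ.symm

lemma permIso_apply (σ : Equiv.Perm (Fin n)) (x : E n) (i : Fin n) :
    permIso σ x i = x (σ i) := by
  simp [permIso, LinearIsometryEquiv.piLpCongrLeft_apply, Equiv.piCongrLeft'_apply]

lemma theta0_apply (i : Fin n) : theta0 n i = (Real.sqrt n)⁻¹ := rfl

lemma permIso_theta0 (σ : Equiv.Perm (Fin n)) : permIso σ (theta0 n) = theta0 n := by
  ext i; rw [permIso_apply]; rfl

lemma permIso_lpBall (σ : Equiv.Perm (Fin n)) (p : ℝ) :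
    ⇑(permIso σ) '' lpBall n p = lpBall n p := by
  have key : ∀ (τ : Equiv.Perm (Fin n)) (x : E n), x ∈ lpBall n p → permIso τ x ∈ lpBall n p := by
    intro τ x hx
    simp only [lpBall, Set.mem_setOf_eq] at hx ⊢
    calc ∑ i, |permIso τ x i| ^ p = ∑ i, |x (τ i)| ^ p := by
          exact Finset.sum_congr rfl fun i _ => by rw [permIso_apply]
      _ = ∑ i, |x i| ^ p := Equiv.sum_comp τ (fun j => |x j| ^ p)
      _ ≤ 1 := hx
  apply Set.Subset.antisymm
  · rintro _ ⟨x, hx, rfl⟩; exact key σ x hx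
  · intro x hx
    refine ⟨permIso σ⁻¹ x, key σ⁻¹ x hx, ?_⟩
    ext i
    rw [permIso_apply, permIso_apply σ⁻¹ x (σ i), Equiv.Perm.inv_def, Equiv.symm_apply_apply]
lemma permIso_comm_projPerp (σ : Equiv.Perm (Fin n)) (x : E n) :
    permIso σ (projPerp (theta0 n) x) = projPerp (theta0 n) (permIso σ x) := by
  unfold projPerp
  rw [(permIso σ).map_sub, (permIso σ).map_smul, permIso_theta0]
  congr 2
  rw [← permIso_theta0 σ]
  exact ((permIso σ).inner_map_map x (theta0 n)).symm

lemma permIso_K (σ : Equiv.Perm (Fin n)) (p : ℝ) :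
    ⇑(permIso σ) '' (projPerp (theta0 n) '' lpBall n p) = projPerp (theta0 n) '' lpBall n p := by
  rw [← Set.image_comp]
  have : (⇑(permIso σ) ∘ projPerp (theta0 n)) = projPerp (theta0 n) ∘ ⇑(permIso σ) := by
    funext x; exact permIso_comm_projPerp σ x
  rw [this, Set.image_comp, permIso_lpBall]

lemma isCompact_K (p : ℝ) (hp : 1 ≤ p) : IsCompact (projPerp (theta0 n) '' lpBall n p) := by
  have hcont : Continuous (projPerp (theta0 n) : E n → E n) := by
    unfold projPerp
    exact continuous_id.sub (by fun_prop)
  refine IsCompact.image ?_ hcont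
  have hclosed : IsClosed (lpBall n p) := by
    have : Continuous fun x : E n => ∑ i, |x i| ^ p := by
      apply continuous_finset_sum
      intro i _
      have h1 : Continuous fun x : E n => |x i| := by
        have : Continuous fun x : E n => x i :=
          (continuous_apply i).comp (PiLp.continuous_ofLp 2 (fun _ : Fin n => ℝ))
        exact this.abs
      exact h1.rpow_const (fun x => Or.inr (le_trans zero_le_one hp))
    exact isClosed_le this continuous_const
  have hbdd : Bornology.IsBounded (lpBall n p) := by
    have : lpBall n p ⊆ Metric.closedBall 0 (Real.sqrt n) := by
      intro x hx
      simp only [lpBall, Set.mem_setOf_eq] at hx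
      have hxi : ∀ i, |x i| ≤ 1 := by
        intro i
        by_contra hgt
        push_neg at hgt
        have h1 : (1:ℝ) < |x i| ^ p :=
          (Real.one_lt_rpow_iff_of_pos (lt_trans one_pos hgt)).mpr
            (Or.inl ⟨hgt, lt_of_lt_of_le one_pos hp⟩)
        have h2 : |x i| ^ p ≤ ∑ j, |x j| ^ p := by
          apply Finset.single_le_sum (f := fun j => |x j| ^ p) _ (Finset.mem_univ i)
          intro j _
          positivity
        linarith
      simp only [Metric.mem_closedBall, dist_zero_right]
      rw [EuclideanSpace.norm_eq]
      have hsum : ∑ i, ‖x i‖ ^ 2 ≤ (n : ℝ) := by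
        calc ∑ i, ‖x i‖ ^ 2 ≤ ∑ _i : Fin n, (1:ℝ) := by
              apply Finset.sum_le_sum
              intro i _
              rw [Real.norm_eq_abs]
              exact pow_le_one₀ (abs_nonneg _) (hxi i)
          _ = (n : ℝ) := by simp
      calc Real.sqrt (∑ i, ‖x i‖ ^ 2) ≤ Real.sqrt n := Real.sqrt_le_sqrt hsum
        _ = Real.sqrt n := rfl
    exact (Metric.isBounded_closedBall).subset this
  exact Metric.isCompact_of_isClosed_isBounded hclosed hbdd


lemma map_unifProj (σ : Equiv.Perm (Fin n)) (p : ℝ) :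
    Measure.map (⇑(permIso σ)) (unifProj n p) = unifProj n p := by
  have hpre : ⇑(permIso σ) ⁻¹' (projPerp (theta0 n) '' lpBall n p)
      = projPerp (theta0 n) '' lpBall n p := by
    conv_lhs => rw [← permIso_K σ p]
    exact Set.preimage_image_eq _ (permIso σ).injective
  have hmeas : Measurable ⇑(permIso σ) := (permIso σ).continuous.measurable
  unfold unifProj unifH
  rw [Measure.map_smul]
  congr 1
  ext s hs
  rw [Measure.map_apply hmeas hs, Measure.restrict_apply (hmeas hs), Measure.restrict_apply hs]
  have h2 : ⇑(permIso σ) ⁻¹' s ∩ (projPerp (theta0 n) '' lpBall n p)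
      = ⇑(permIso σ) ⁻¹' (s ∩ (projPerp (theta0 n) '' lpBall n p)) := by
    rw [Set.preimage_inter, hpre]
  rw [h2]
  exact (permIso σ).toIsometryEquiv.hausdorffMeasure_preimage _ _

lemma integral_comp_permIso (σ : Equiv.Perm (Fin n)) (p : ℝ) (f : E n → ℝ) :
    ∫ x, f (permIso σ x) ∂(unifProj n p) = ∫ x, f x ∂(unifProj n p) := by
  conv_rhs => rw [← map_unifProj σ p]
  exact (MeasureTheory.integral_map_equiv
    ((permIso σ).toHomeomorph.toMeasurableEquiv) f).symm


lemma abs_coord_le_norm (x : E n) (i : Fin n) : |x i| ≤ ‖x‖ := by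
  rw [EuclideanSpace.norm_eq, ← Real.sqrt_sq (abs_nonneg (x i))]
  apply Real.sqrt_le_sqrt
  calc |x i| ^ 2 = ‖x i‖ ^ 2 := by rw [Real.norm_eq_abs]
    _ ≤ ∑ j, ‖x j‖ ^ 2 :=
        Finset.single_le_sum (f := fun j => ‖x j‖ ^ 2) (fun j _ => sq_nonneg _)
          (Finset.mem_univ i)

instance isFiniteMeasure_unifProj (p : ℝ) : IsFiniteMeasure (unifProj n p) := by
  constructor
  unfold unifProj unifH
  rw [Measure.smul_apply, Measure.restrict_apply_univ, smul_eq_mul]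
  rcases eq_or_ne (μH[(n : ℝ) - 1] (projPerp (theta0 n) '' lpBall n p)) 0 with h | h
  · simp [h]
  · rcases eq_or_ne (μH[(n : ℝ) - 1] (projPerp (theta0 n) '' lpBall n p)) ⊤ with h' | h'
    · simp [h']
    · rw [ENNReal.inv_mul_cancel h h']
      exact ENNReal.one_lt_top

lemma ae_mem_K (p : ℝ) (hp : 1 ≤ p) :
    ∀ᵐ x ∂(unifProj n p), x ∈ projPerp (theta0 n) '' lpBall n p := by
  have hKm : MeasurableSet (projPerp (theta0 n) '' lpBall n p) :=
    (isCompact_K p hp).isClosed.measurableSet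
  unfold unifProj unifH
  rw [ae_iff]
  have : {x : E n | ¬ x ∈ projPerp (theta0 n) '' lpBall n p}
      = (projPerp (theta0 n) '' lpBall n p)ᶜ := rfl
  rw [this, Measure.smul_apply, Measure.restrict_apply hKm.compl,
    Set.compl_inter_self, measure_empty, smul_eq_mul, mul_zero]

lemma continuous_coord (i : Fin n) : Continuous fun x : E n => x i :=
  (continuous_apply i).comp (PiLp.continuous_ofLp 2 (fun _ : Fin n => ℝ))

lemma integrable_mono4 (p : ℝ) (hp : 1 ≤ p) (i j k l : Fin n) :
    Integrable (fun x : E n => x i * x j * x k * x l) (unifProj n p) := by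
  obtain ⟨R, hR0, hRb⟩ : ∃ R : ℝ, 0 ≤ R ∧
      projPerp (theta0 n) '' lpBall n p ⊆ Metric.closedBall 0 R := by
    obtain ⟨R, hRb⟩ := (isCompact_K p hp).isBounded.subset_closedBall (0 : E n)
    exact ⟨max R 0, le_max_right _ _,
      hRb.trans (Metric.closedBall_subset_closedBall (le_max_left _ _))⟩
  apply Integrable.mono' (g := fun _ => R ^ 4) (integrable_const _)
  · exact (((((continuous_coord i).mul (continuous_coord j)).mul
      (continuous_coord k)).mul (continuous_coord l))).aestronglyMeasurable
  · filter_upwards [ae_mem_K p hp] with x hx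
    have hxR : ‖x‖ ≤ R := by
      have := hRb hx
      simpa [Metric.mem_closedBall, dist_zero_right] using this
    have hb : ∀ t : Fin n, |x t| ≤ R := fun t => (abs_coord_le_norm x t).trans hxR
    have : ‖x i * x j * x k * x l‖ = |x i| * |x j| * |x k| * |x l| := by
      rw [Real.norm_eq_abs, abs_mul, abs_mul, abs_mul]
    rw [this]
    calc |x i| * |x j| * |x k| * |x l| ≤ R * R * R * R := by
          gcongr <;> first | exact abs_nonneg _ | exact hb _ |
            exact mul_nonneg (mul_nonneg (abs_nonneg _) (abs_nonneg _)) (abs_nonneg _) |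
            exact mul_nonneg (abs_nonneg _) (abs_nonneg _)
      _ = R ^ 4 := by ring

lemma integrable_mono2 (p : ℝ) (hp : 1 ≤ p) (i j : Fin n) :
    Integrable (fun x : E n => x i * x j) (unifProj n p) := by
  obtain ⟨R, hR0, hRb⟩ : ∃ R : ℝ, 0 ≤ R ∧
      projPerp (theta0 n) '' lpBall n p ⊆ Metric.closedBall 0 R := by
    obtain ⟨R, hRb⟩ := (isCompact_K p hp).isBounded.subset_closedBall (0 : E n)
    exact ⟨max R 0, le_max_right _ _,
      hRb.trans (Metric.closedBall_subset_closedBall (le_max_left _ _))⟩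
  apply Integrable.mono' (g := fun _ => R ^ 2) (integrable_const _)
  · exact ((continuous_coord i).mul (continuous_coord j)).aestronglyMeasurable
  · filter_upwards [ae_mem_K p hp] with x hx
    have hxR : ‖x‖ ≤ R := by
      have := hRb hx
      simpa [Metric.mem_closedBall, dist_zero_right] using this
    have hb : ∀ t : Fin n, |x t| ≤ R := fun t => (abs_coord_le_norm x t).trans hxR
    have h1 : ‖x i * x j‖ = |x i| * |x j| := by rw [Real.norm_eq_abs, abs_mul]
    rw [h1]
    calc |x i| * |x j| ≤ R * R := by gcongr <;>
          first | exact abs_nonneg _ | exact hb _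
      _ = R ^ 2 := by ring

open Finset

def mom4 (n : ℕ) (p : ℝ) (i j k l : Fin n) : ℝ :=
  ∫ x, x i * x j * x k * x l ∂(unifProj n p)

def mom2 (n : ℕ) (p : ℝ) (i j : Fin n) : ℝ :=
  ∫ x, x i * x j ∂(unifProj n p)

lemma mom4_perm (p : ℝ) (σ : Equiv.Perm (Fin n)) (i j k l : Fin n) :
    mom4 n p (σ i) (σ j) (σ k) (σ l) = mom4 n p i j k l := by
  unfold mom4
  have h : (fun x : E n => x (σ i) * x (σ j) * x (σ k) * x (σ l))
      = fun x => (fun y : E n => y i * y j * y k * y l) (permIso σ x) := by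
    funext x; simp only [permIso_apply]
  rw [h, integral_comp_permIso σ p (fun y : E n => y i * y j * y k * y l)]

lemma mom2_perm (p : ℝ) (σ : Equiv.Perm (Fin n)) (i j : Fin n) :
    mom2 n p (σ i) (σ j) = mom2 n p i j := by
  unfold mom2
  have h : (fun x : E n => x (σ i) * x (σ j))
      = fun x => (fun y : E n => y i * y j) (permIso σ x) := by
    funext x; simp only [permIso_apply]
  rw [h, integral_comp_permIso σ p (fun y : E n => y i * y j)]

lemma mom4_s12 (p : ℝ) (i j k l : Fin n) : mom4 n p i j k l = mom4 n p j i k l := by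
  unfold mom4; congr 1; funext x; ring
lemma mom4_s23 (p : ℝ) (i j k l : Fin n) : mom4 n p i j k l = mom4 n p i k j l := by
  unfold mom4; congr 1; funext x; ring
lemma mom4_s34 (p : ℝ) (i j k l : Fin n) : mom4 n p i j k l = mom4 n p i j l k := by
  unfold mom4; congr 1; funext x; ring

lemma pair_structure (hn : 4 ≤ n) (p : ℝ) :
    ∀ i j : Fin n, mom2 n p i j =
      mom2 n p ⟨0, by linarith⟩ ⟨1, by linarith⟩
      + (mom2 n p (⟨0, by linarith⟩ : Fin n) ⟨0, by linarith⟩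
          - mom2 n p ⟨0, by linarith⟩ ⟨1, by linarith⟩) * (if i = j then (1:ℝ) else 0) := by
  set i0 : Fin n := ⟨0, by linarith⟩ with hi0
  set i1 : Fin n := ⟨1, by linarith⟩ with hi1
  have d01 : i0 ≠ i1 := by simp [hi0, hi1, Fin.ext_iff]
  intro i j
  by_cases hij : i = j
  · subst hij
    obtain ⟨σ, hσ⟩ := exists_perm_comp ![i] ![i0] (fun a b _ => Subsingleton.elim a b)
      (fun a b _ => Subsingleton.elim a b)
    have h0 := hσ 0
    simp only [Matrix.cons_val_zero] at h0
    rw [← mom2_perm p σ i i, h0]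
    simp
  · obtain ⟨σ, hσ⟩ := exists_perm_comp ![i, j] ![i0, i1] (inj2 hij) (inj2 d01)
    have h0 := hσ 0; have h1 := hσ 1
    simp only [Matrix.cons_val_zero, Matrix.cons_val_one, Matrix.head_cons] at h0 h1
    rw [← mom2_perm p σ i j, h0, h1]
    simp [hij]

lemma pair_sum (m2 : Fin n → Fin n → ℝ) (c0 c1 : ℝ)
    (hφ : ∀ i j, m2 i j = c0 + c1 * (if i = j then (1:ℝ) else 0))
    (a : Fin n → ℝ) (ha1 : ∑ i, a i = 0) (ha2 : ∑ i, a i * a i = 1) :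
    ∑ i, ∑ j, (a i * a j) * m2 i j = c1 := by
  simp only [hφ]
  simp only [mul_add, add_mul, mul_ite, ite_mul, mul_one, mul_zero, zero_mul, one_mul,
    Finset.sum_add_distrib, Finset.sum_ite_irrel, Finset.sum_ite_eq, Finset.sum_ite_eq',
    Finset.mem_univ, if_true, Finset.sum_const_zero, ← Finset.sum_mul, ← Finset.mul_sum,
    ha1, ha2]
  ring

lemma exp2 (p : ℝ) (hp : 1 ≤ p) (a : E n) :
    ∫ x, (⟪x, a⟫ : ℝ) ^ 2 ∂(unifProj n p)
      = ∑ i, ∑ j, (a i * a j) * mom2 n p i j := by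
  have hinner : ∀ x : E n, (⟪x, a⟫ : ℝ) = ∑ i, x i * a i := by
    intro x
    rw [PiLp.inner_apply]
    exact Finset.sum_congr rfl fun i _ => by simp [RCLike.inner_apply]; ring
  have hbase : ∀ i j : Fin n,
      Integrable (fun x : E n => (x i * a i) * (x j * a j)) (unifProj n p) := by
    intro i j
    have heq : (fun x : E n => (x i * a i) * (x j * a j))
        = fun x => (a i * a j) * (x i * x j) := by funext x; ring
    rw [heq]
    exact (integrable_mono2 p hp i j).const_mul _
  calc ∫ x, (⟪x, a⟫ : ℝ) ^ 2 ∂(unifProj n p)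
      = ∫ x, ∑ i, ∑ j, (x i * a i) * (x j * a j) ∂(unifProj n p) := by
        refine integral_congr_ae (Filter.Eventually.of_forall fun x => ?_)
        beta_reduce
        rw [hinner, sq, Finset.sum_mul_sum]
    _ = ∑ i, ∑ j, ∫ x, (x i * a i) * (x j * a j) ∂(unifProj n p) := by
        rw [integral_finset_sum _ (fun i _ => integrable_finset_sum _ (fun j _ => hbase i j))]
        exact Finset.sum_congr rfl fun i _ => integral_finset_sum _ (fun j _ => hbase i j)
    _ = ∑ i, ∑ j, (a i * a j) * mom2 n p i j := by
        refine Finset.sum_congr rfl fun i _ => Finset.sum_congr rfl fun j _ => ?_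
        have heq : (fun x : E n => (x i * a i) * (x j * a j))
            = fun x => (a i * a j) * (x i * x j) := by funext x; ring
        rw [heq, integral_const_mul]
        rfl

lemma exp4 (p : ℝ) (hp : 1 ≤ p) (a b : E n) :
    ∫ x, (⟪x, a⟫ : ℝ) ^ 2 * (⟪x, b⟫ : ℝ) ^ 2 ∂(unifProj n p)
      = ∑ i, ∑ j, ∑ k, ∑ l, (a i * a j * b k * b l) * mom4 n p i j k l := by
  have hinner : ∀ (x v : E n), (⟪x, v⟫ : ℝ) = ∑ i, x i * v i := by
    intro x v
    rw [PiLp.inner_apply]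
    exact Finset.sum_congr rfl fun i _ => by simp [RCLike.inner_apply]; ring
  have hbase : ∀ i j k l : Fin n,
      Integrable (fun x : E n => (x i * a i) * (x j * a j) * ((x k * b k) * (x l * b l)))
        (unifProj n p) := by
    intro i j k l
    have heq : (fun x : E n => (x i * a i) * (x j * a j) * ((x k * b k) * (x l * b l)))
        = fun x => (a i * a j * b k * b l) * (x i * x j * x k * x l) := by funext x; ring
    rw [heq]
    exact (integrable_mono4 p hp i j k l).const_mul _
  have h3 : ∀ i j k : Fin n, Integrable
      (fun x : E n => ∑ l, (x i * a i) * (x j * a j) * ((x k * b k) * (x l * b l)))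
      (unifProj n p) := fun i j k => integrable_finset_sum _ (fun l _ => hbase i j k l)
  have h2 : ∀ i j : Fin n, Integrable
      (fun x : E n => ∑ k, ∑ l, (x i * a i) * (x j * a j) * ((x k * b k) * (x l * b l)))
      (unifProj n p) := fun i j => integrable_finset_sum _ (fun k _ => h3 i j k)
  have h1 : ∀ i : Fin n, Integrable
      (fun x : E n => ∑ j, ∑ k, ∑ l, (x i * a i) * (x j * a j) * ((x k * b k) * (x l * b l)))
      (unifProj n p) := fun i => integrable_finset_sum _ (fun j _ => h2 i j)
  calc ∫ x, (⟪x, a⟫ : ℝ) ^ 2 * (⟪x, b⟫ : ℝ) ^ 2 ∂(unifProj n p)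
      = ∫ x, ∑ i, ∑ j, ∑ k, ∑ l,
          (x i * a i) * (x j * a j) * ((x k * b k) * (x l * b l)) ∂(unifProj n p) := by
        refine integral_congr_ae (Filter.Eventually.of_forall fun x => ?_)
        beta_reduce
        rw [hinner x a, hinner x b, sq, sq, Finset.sum_mul_sum, Finset.sum_mul_sum,
          Finset.sum_mul]
        refine Finset.sum_congr rfl fun i _ => ?_
        rw [Finset.sum_mul]
        refine Finset.sum_congr rfl fun j _ => ?_
        rw [Finset.mul_sum]
        exact Finset.sum_congr rfl fun k _ => by rw [Finset.mul_sum]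
    _ = ∑ i, ∑ j, ∑ k, ∑ l, ∫ x,
          (x i * a i) * (x j * a j) * ((x k * b k) * (x l * b l)) ∂(unifProj n p) := by
        rw [integral_finset_sum _ (fun i _ => h1 i)]
        refine Finset.sum_congr rfl fun i _ => ?_
        rw [integral_finset_sum _ (fun j _ => h2 i j)]
        refine Finset.sum_congr rfl fun j _ => ?_
        rw [integral_finset_sum _ (fun k _ => h3 i j k)]
        exact Finset.sum_congr rfl fun k _ => integral_finset_sum _ (fun l _ => hbase i j k l)
    _ = ∑ i, ∑ j, ∑ k, ∑ l, (a i * a j * b k * b l) * mom4 n p i j k l := by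
        refine Finset.sum_congr rfl fun i _ => Finset.sum_congr rfl fun j _ =>
          Finset.sum_congr rfl fun k _ => Finset.sum_congr rfl fun l _ => ?_
        have heq : (fun x : E n => (x i * a i) * (x j * a j) * ((x k * b k) * (x l * b l)))
            = fun x => (a i * a j * b k * b l) * (x i * x j * x k * x l) := by funext x; ring
        rw [heq, integral_const_mul]
        rfl


lemma master (n : ℕ) (hn : 4 ≤ n) (p : ℝ) (hp : 1 ≤ p) :
    ∃ Λ κ : ℝ, ∀ a b : E n, (∑ i, a i = 0) → (∑ i, a i * a i = 1) →
      (∑ i, b i = 0) → (∑ i, b i * b i = 1) → (∑ i, a i * b i = 0) →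
      covf (unifProj n p) a b = Λ + κ * ∑ i, (a i * a i) * (b i * b i) := by
  have hφ4 := moment_structure (mom4 n p) hn (fun σ i j k l => mom4_perm p σ i j k l)
    (mom4_s12 p) (mom4_s23 p) (mom4_s34 p)
  have hφ2 := pair_structure hn p
  refine ⟨(mom4 n p (⟨0, by linarith⟩ : Fin n) ⟨0, by linarith⟩ ⟨1, by linarith⟩ ⟨1, by linarith⟩
      - 2 * mom4 n p (⟨0, by linarith⟩ : Fin n) ⟨0, by linarith⟩ ⟨1, by linarith⟩ ⟨2, by linarith⟩
      + mom4 n p (⟨0, by linarith⟩ : Fin n) ⟨1, by linarith⟩ ⟨2, by linarith⟩ ⟨3, by linarith⟩)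
      - (mom2 n p (⟨0, by linarith⟩ : Fin n) ⟨0, by linarith⟩
          - mom2 n p (⟨0, by linarith⟩ : Fin n) ⟨1, by linarith⟩) ^ 2,
    mom4 n p (⟨0, by linarith⟩ : Fin n) ⟨0, by linarith⟩ ⟨0, by linarith⟩ ⟨0, by linarith⟩
      - 3 * mom4 n p (⟨0, by linarith⟩ : Fin n) ⟨0, by linarith⟩ ⟨1, by linarith⟩ ⟨1, by linarith⟩
      - 4 * mom4 n p (⟨0, by linarith⟩ : Fin n) ⟨0, by linarith⟩ ⟨0, by linarith⟩ ⟨1, by linarith⟩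
      + 12 * mom4 n p (⟨0, by linarith⟩ : Fin n) ⟨0, by linarith⟩ ⟨1, by linarith⟩ ⟨2, by linarith⟩
      - 6 * mom4 n p (⟨0, by linarith⟩ : Fin n) ⟨1, by linarith⟩ ⟨2, by linarith⟩ ⟨3, by linarith⟩, ?_⟩
  intro a b ha1 ha2 hb1 hb2 hab
  unfold covf
  rw [exp4 p hp a b, exp2 p hp a, exp2 p hp b,
    quad_sum (mom4 n p) _ _ _ _ _ hφ4 a b ha1 hb1 ha2 hb2 hab,
    pair_sum (mom2 n p) _ _ hφ2 a ha1 ha2,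
    pair_sum (mom2 n p) _ _ hφ2 b hb1 hb2]
  ring

end Aux

/-- decomposition of `f(η₁,η₂)` on `P_{θ₀⊥}B_p^n` in terms of the extremal values
and `∑ η₁(i)²η₂(i)²`. -/
theorem covf_decomposition_proj
    (n : ℕ) (hn : 4 ≤ n) (p : ℝ) (hp : 1 ≤ p)
    (η₁ η₂ : E n) (hη₁ : ‖η₁‖ = 1) (hη₂ : ‖η₂‖ = 1) (hortho : ⟪η₁, η₂⟫ = 0)
    (hθ₁ : ⟪η₁, theta0 n⟫ = 0) (hθ₂ : ⟪η₂, theta0 n⟫ = 0) :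
    covf (unifProj n p) η₁ η₂ =
      covf (unifProj n p)
          ((Real.sqrt 2)⁻¹ • (stdb (⟨0, by omega⟩ : Fin n) - stdb ⟨1, by omega⟩))
          ((Real.sqrt 2)⁻¹ • (stdb (⟨2, by omega⟩ : Fin n) - stdb ⟨3, by omega⟩)) +
      4 * (covf (unifProj n p)
            ((2:ℝ)⁻¹ • (stdb (⟨0, by omega⟩ : Fin n) - stdb ⟨1, by omega⟩
              + stdb ⟨2, by omega⟩ - stdb ⟨3, by omega⟩))
            ((2:ℝ)⁻¹ • (stdb (⟨0, by omega⟩ : Fin n) - stdb ⟨1, by omega⟩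
              - stdb ⟨2, by omega⟩ + stdb ⟨3, by omega⟩)) -
          covf (unifProj n p)
            ((Real.sqrt 2)⁻¹ • (stdb (⟨0, by omega⟩ : Fin n) - stdb ⟨1, by omega⟩))
            ((Real.sqrt 2)⁻¹ • (stdb (⟨2, by omega⟩ : Fin n) - stdb ⟨3, by omega⟩))) *
        ∑ i, η₁ i ^ 2 * η₂ i ^ 2 := by
  obtain ⟨Λ, κ, hmaster⟩ := master n hn p hp
  have hinner : ∀ (x v : E n), (⟪x, v⟫ : ℝ) = ∑ i, x i * v i := by
    intro x v
    rw [PiLp.inner_apply]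
    exact Finset.sum_congr rfl fun i _ => by simp [RCLike.inner_apply]; ring
  have hsqn : (Real.sqrt n)⁻¹ ≠ 0 := by
    have h0 : (0:ℝ) < n := by
      have : (4:ℝ) ≤ n := by exact_mod_cast hn
      linarith
    positivity
  have hθsum : ∀ v : E n, (⟪v, theta0 n⟫ : ℝ) = 0 → ∑ i, v i = 0 := by
    intro v hv
    rw [hinner] at hv
    have : (∑ i, v i) * (Real.sqrt n)⁻¹ = 0 := by
      rw [Finset.sum_mul]
      exact hv ▸ Finset.sum_congr rfl fun i _ => by rw [theta0_apply]
    rcases mul_eq_zero.mp this with h | h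
    · exact h
    · exact absurd h hsqn
  have hη1sum : ∑ i, η₁ i = 0 := hθsum η₁ hθ₁
  have hη2sum : ∑ i, η₂ i = 0 := hθsum η₂ hθ₂
  have hnormsq : ∀ v : E n, ‖v‖ = 1 → ∑ i, v i * v i = 1 := by
    intro v hv
    rw [EuclideanSpace.norm_eq] at hv
    have h1 : ∑ i, ‖v i‖ ^ 2 = 1 := by
      have hnn : 0 ≤ ∑ i, ‖v i‖ ^ 2 := Finset.sum_nonneg fun i _ => sq_nonneg _
      nlinarith [Real.sq_sqrt hnn, hv]
    calc ∑ i, v i * v i = ∑ i, ‖v i‖ ^ 2 :=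
          Finset.sum_congr rfl fun i _ => by rw [Real.norm_eq_abs, sq_abs, sq]
      _ = 1 := h1
  have hη1sq : ∑ i, η₁ i * η₁ i = 1 := hnormsq η₁ hη₁
  have hη2sq : ∑ i, η₂ i * η₂ i = 1 := hnormsq η₂ hη₂
  have hη12 : ∑ i, η₁ i * η₂ i = 0 := by rw [← hinner]; exact hortho
  have covη := hmaster η₁ η₂ hη1sum hη1sq hη2sum hη2sq hη12
  -- the ξ-bar vectors
  have hsq2 : (Real.sqrt 2)⁻¹ * (Real.sqrt 2)⁻¹ = 2⁻¹ := by
    rw [← mul_inv, Real.mul_self_sqrt (by norm_num)]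
  have hv1c : ∀ i : Fin n, ((Real.sqrt 2)⁻¹ • (stdb (⟨0, by omega⟩ : Fin n) - stdb ⟨1, by omega⟩) : E n) i
      = (Real.sqrt 2)⁻¹ * ((if i = (⟨0, by omega⟩ : Fin n) then (1:ℝ) else 0)
          - (if i = (⟨1, by omega⟩ : Fin n) then (1:ℝ) else 0)) := by
    intro i
    simp [stdb, EuclideanSpace.single_apply, PiLp.smul_apply, PiLp.sub_apply, smul_eq_mul]
  have hv2c : ∀ i : Fin n, ((Real.sqrt 2)⁻¹ • (stdb (⟨2, by omega⟩ : Fin n) - stdb ⟨3, by omega⟩) : E n) i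
      = (Real.sqrt 2)⁻¹ * ((if i = (⟨2, by omega⟩ : Fin n) then (1:ℝ) else 0)
          - (if i = (⟨3, by omega⟩ : Fin n) then (1:ℝ) else 0)) := by
    intro i
    simp [stdb, EuclideanSpace.single_apply, PiLp.smul_apply, PiLp.sub_apply, smul_eq_mul]
  have hw1c : ∀ i : Fin n, ((2:ℝ)⁻¹ • (stdb (⟨0, by omega⟩ : Fin n) - stdb ⟨1, by omega⟩
        + stdb ⟨2, by omega⟩ - stdb ⟨3, by omega⟩) : E n) i
      = (2:ℝ)⁻¹ * ((if i = (⟨0, by omega⟩ : Fin n) then (1:ℝ) else 0)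
          - (if i = (⟨1, by omega⟩ : Fin n) then (1:ℝ) else 0)
          + (if i = (⟨2, by omega⟩ : Fin n) then (1:ℝ) else 0)
          - (if i = (⟨3, by omega⟩ : Fin n) then (1:ℝ) else 0)) := by
    intro i
    simp [stdb, EuclideanSpace.single_apply, PiLp.smul_apply, PiLp.sub_apply, PiLp.add_apply,
      smul_eq_mul]
  have hw2c : ∀ i : Fin n, ((2:ℝ)⁻¹ • (stdb (⟨0, by omega⟩ : Fin n) - stdb ⟨1, by omega⟩
        - stdb ⟨2, by omega⟩ + stdb ⟨3, by omega⟩) : E n) i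
      = (2:ℝ)⁻¹ * ((if i = (⟨0, by omega⟩ : Fin n) then (1:ℝ) else 0)
          - (if i = (⟨1, by omega⟩ : Fin n) then (1:ℝ) else 0)
          - (if i = (⟨2, by omega⟩ : Fin n) then (1:ℝ) else 0)
          + (if i = (⟨3, by omega⟩ : Fin n) then (1:ℝ) else 0)) := by
    intro i
    simp [stdb, EuclideanSpace.single_apply, PiLp.smul_apply, PiLp.sub_apply, PiLp.add_apply,
      smul_eq_mul]
    split_ifs <;> ring
  have d01 : ¬ (⟨0, by omega⟩ : Fin n) = ⟨1, by omega⟩ := by simp [Fin.ext_iff]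
  have d02 : ¬ (⟨0, by omega⟩ : Fin n) = ⟨2, by omega⟩ := by simp [Fin.ext_iff]
  have d03 : ¬ (⟨0, by omega⟩ : Fin n) = ⟨3, by omega⟩ := by simp [Fin.ext_iff]
  have d12 : ¬ (⟨1, by omega⟩ : Fin n) = ⟨2, by omega⟩ := by simp [Fin.ext_iff]
  have d13 : ¬ (⟨1, by omega⟩ : Fin n) = ⟨3, by omega⟩ := by simp [Fin.ext_iff]
  have d23 : ¬ (⟨2, by omega⟩ : Fin n) = ⟨3, by omega⟩ := by simp [Fin.ext_iff]
  have hv1sum : ∑ i, ((Real.sqrt 2)⁻¹ • (stdb (⟨0, by omega⟩ : Fin n) - stdb ⟨1, by omega⟩) : E n) i = 0 := by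
    simp only [hv1c]
    simp [Finset.mul_sum, Finset.sum_sub_distrib, Finset.sum_ite_eq', mul_sub]
  have hv2sum : ∑ i, ((Real.sqrt 2)⁻¹ • (stdb (⟨2, by omega⟩ : Fin n) - stdb ⟨3, by omega⟩) : E n) i = 0 := by
    simp only [hv2c]
    simp [Finset.mul_sum, Finset.sum_sub_distrib, Finset.sum_ite_eq', mul_sub]
  have hv1sq : ∑ i, ((Real.sqrt 2)⁻¹ • (stdb (⟨0, by omega⟩ : Fin n) - stdb ⟨1, by omega⟩) : E n) i
      * ((Real.sqrt 2)⁻¹ • (stdb (⟨0, by omega⟩ : Fin n) - stdb ⟨1, by omega⟩) : E n) i = 1 := by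
    simp only [hv1c]
    simp only [mul_sub, sub_mul, mul_ite, ite_mul, mul_one, mul_zero, zero_mul, one_mul,
      Finset.sum_sub_distrib, Finset.sum_ite_irrel, Finset.sum_ite_eq', Finset.mem_univ,
      if_true, Finset.sum_const_zero, d01, d02, d03, d12, d13, d23, if_false, ite_self]
    simp [d01, Ne.symm, hsq2]
    norm_num
  have d10 : ¬ (⟨1, by omega⟩ : Fin n) = ⟨0, by omega⟩ := fun h => d01 h.symm
  have d20 : ¬ (⟨2, by omega⟩ : Fin n) = ⟨0, by omega⟩ := fun h => d02 h.symm
  have d30 : ¬ (⟨3, by omega⟩ : Fin n) = ⟨0, by omega⟩ := fun h => d03 h.symm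
  have d21 : ¬ (⟨2, by omega⟩ : Fin n) = ⟨1, by omega⟩ := fun h => d12 h.symm
  have d31 : ¬ (⟨3, by omega⟩ : Fin n) = ⟨1, by omega⟩ := fun h => d13 h.symm
  have d32 : ¬ (⟨3, by omega⟩ : Fin n) = ⟨2, by omega⟩ := fun h => d23 h.symm
  have hv2sq : ∑ i, (((Real.sqrt 2)⁻¹ • (stdb (⟨2, by omega⟩ : Fin n) - stdb ⟨3, by omega⟩) : E n)) i
      * (((Real.sqrt 2)⁻¹ • (stdb (⟨2, by omega⟩ : Fin n) - stdb ⟨3, by omega⟩) : E n)) i = 1 := by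
    simp only [hv2c]
    simp only [mul_sub, sub_mul, mul_ite, ite_mul, mul_one, mul_zero, zero_mul, one_mul,
      Finset.sum_sub_distrib, Finset.sum_ite_irrel, Finset.sum_ite_eq', Finset.mem_univ,
      if_true, Finset.sum_const_zero, d01, d02, d03, d12, d13, d23, d10, d20, d30, d21, d31, d32,
      if_false, ite_self]
    simp [hsq2]
    norm_num
  have hv12 : ∑ i, (((Real.sqrt 2)⁻¹ • (stdb (⟨0, by omega⟩ : Fin n) - stdb ⟨1, by omega⟩) : E n)) i
      * (((Real.sqrt 2)⁻¹ • (stdb (⟨2, by omega⟩ : Fin n) - stdb ⟨3, by omega⟩) : E n)) i = 0 := by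
    simp only [hv1c, hv2c]
    simp only [mul_sub, sub_mul, mul_ite, ite_mul, mul_one, mul_zero, zero_mul, one_mul,
      Finset.sum_sub_distrib, Finset.sum_ite_irrel, Finset.sum_ite_eq', Finset.mem_univ,
      if_true, Finset.sum_const_zero, d01, d02, d03, d12, d13, d23, d10, d20, d30, d21, d31, d32,
      if_false, ite_self]
    simp
  have hvP : ∑ i, (((Real.sqrt 2)⁻¹ • (stdb (⟨0, by omega⟩ : Fin n) - stdb ⟨1, by omega⟩) : E n)) i
      * (((Real.sqrt 2)⁻¹ • (stdb (⟨0, by omega⟩ : Fin n) - stdb ⟨1, by omega⟩) : E n)) i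
      * ((((Real.sqrt 2)⁻¹ • (stdb (⟨2, by omega⟩ : Fin n) - stdb ⟨3, by omega⟩) : E n)) i
        * (((Real.sqrt 2)⁻¹ • (stdb (⟨2, by omega⟩ : Fin n) - stdb ⟨3, by omega⟩) : E n)) i) = 0 := by
    simp only [hv1c, hv2c]
    simp only [mul_sub, sub_mul, mul_ite, ite_mul, mul_one, mul_zero, zero_mul, one_mul,
      Finset.sum_sub_distrib, Finset.sum_ite_irrel, Finset.sum_ite_eq', Finset.mem_univ,
      if_true, Finset.sum_const_zero, d01, d02, d03, d12, d13, d23, d10, d20, d30, d21, d31, d32,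
      if_false, ite_self]
    simp
  have hw1sum : ∑ i, (((2:ℝ)⁻¹ • (stdb (⟨0, by omega⟩ : Fin n) - stdb ⟨1, by omega⟩
        + stdb ⟨2, by omega⟩ - stdb ⟨3, by omega⟩) : E n)) i = 0 := by
    simp only [hw1c]
    simp [Finset.mul_sum, Finset.sum_sub_distrib, Finset.sum_add_distrib, Finset.sum_ite_eq',
      mul_sub, mul_add]
  have hw2sum : ∑ i, (((2:ℝ)⁻¹ • (stdb (⟨0, by omega⟩ : Fin n) - stdb ⟨1, by omega⟩
        - stdb ⟨2, by omega⟩ + stdb ⟨3, by omega⟩) : E n)) i = 0 := by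
    simp only [hw2c]
    simp [Finset.mul_sum, Finset.sum_sub_distrib, Finset.sum_add_distrib, Finset.sum_ite_eq',
      mul_sub, mul_add]
  have hw1sq : ∑ i, (((2:ℝ)⁻¹ • (stdb (⟨0, by omega⟩ : Fin n) - stdb ⟨1, by omega⟩
        + stdb ⟨2, by omega⟩ - stdb ⟨3, by omega⟩) : E n)) i
      * (((2:ℝ)⁻¹ • (stdb (⟨0, by omega⟩ : Fin n) - stdb ⟨1, by omega⟩
        + stdb ⟨2, by omega⟩ - stdb ⟨3, by omega⟩) : E n)) i = 1 := by
    simp only [hw1c]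
    simp only [mul_sub, sub_mul, mul_add, add_mul, mul_ite, ite_mul, mul_one, mul_zero,
      zero_mul, one_mul, Finset.sum_sub_distrib, Finset.sum_add_distrib, Finset.sum_ite_irrel,
      Finset.sum_ite_eq', Finset.mem_univ, if_true, Finset.sum_const_zero,
      d01, d02, d03, d12, d13, d23, d10, d20, d30, d21, d31, d32, if_false, ite_self]
    norm_num
  have hw2sq : ∑ i, (((2:ℝ)⁻¹ • (stdb (⟨0, by omega⟩ : Fin n) - stdb ⟨1, by omega⟩
        - stdb ⟨2, by omega⟩ + stdb ⟨3, by omega⟩) : E n)) i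
      * (((2:ℝ)⁻¹ • (stdb (⟨0, by omega⟩ : Fin n) - stdb ⟨1, by omega⟩
        - stdb ⟨2, by omega⟩ + stdb ⟨3, by omega⟩) : E n)) i = 1 := by
    simp only [hw2c]
    simp only [mul_sub, sub_mul, mul_add, add_mul, mul_ite, ite_mul, mul_one, mul_zero,
      zero_mul, one_mul, Finset.sum_sub_distrib, Finset.sum_add_distrib, Finset.sum_ite_irrel,
      Finset.sum_ite_eq', Finset.mem_univ, if_true, Finset.sum_const_zero,
      d01, d02, d03, d12, d13, d23, d10, d20, d30, d21, d31, d32, if_false, ite_self]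
    norm_num
  have hw12 : ∑ i, (((2:ℝ)⁻¹ • (stdb (⟨0, by omega⟩ : Fin n) - stdb ⟨1, by omega⟩
        + stdb ⟨2, by omega⟩ - stdb ⟨3, by omega⟩) : E n)) i
      * (((2:ℝ)⁻¹ • (stdb (⟨0, by omega⟩ : Fin n) - stdb ⟨1, by omega⟩
        - stdb ⟨2, by omega⟩ + stdb ⟨3, by omega⟩) : E n)) i = 0 := by
    simp only [hw1c, hw2c]
    simp only [mul_sub, sub_mul, mul_add, add_mul, mul_ite, ite_mul, mul_one, mul_zero,
      zero_mul, one_mul, Finset.sum_sub_distrib, Finset.sum_add_distrib, Finset.sum_ite_irrel,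
      Finset.sum_ite_eq', Finset.mem_univ, if_true, Finset.sum_const_zero,
      d01, d02, d03, d12, d13, d23, d10, d20, d30, d21, d31, d32, if_false, ite_self]
    norm_num
  have hwP : ∑ i, (((2:ℝ)⁻¹ • (stdb (⟨0, by omega⟩ : Fin n) - stdb ⟨1, by omega⟩
        + stdb ⟨2, by omega⟩ - stdb ⟨3, by omega⟩) : E n)) i
      * (((2:ℝ)⁻¹ • (stdb (⟨0, by omega⟩ : Fin n) - stdb ⟨1, by omega⟩
        + stdb ⟨2, by omega⟩ - stdb ⟨3, by omega⟩) : E n)) i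
      * ((((2:ℝ)⁻¹ • (stdb (⟨0, by omega⟩ : Fin n) - stdb ⟨1, by omega⟩
        - stdb ⟨2, by omega⟩ + stdb ⟨3, by omega⟩) : E n)) i
        * (((2:ℝ)⁻¹ • (stdb (⟨0, by omega⟩ : Fin n) - stdb ⟨1, by omega⟩
        - stdb ⟨2, by omega⟩ + stdb ⟨3, by omega⟩) : E n)) i) = 4⁻¹ := by
    simp only [hw1c, hw2c]
    simp only [mul_sub, sub_mul, mul_add, add_mul, mul_ite, ite_mul, mul_one, mul_zero,
      zero_mul, one_mul, Finset.sum_sub_distrib, Finset.sum_add_distrib, Finset.sum_ite_irrel,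
      Finset.sum_ite_eq', Finset.mem_univ, if_true, Finset.sum_const_zero,
      d01, d02, d03, d12, d13, d23, d10, d20, d30, d21, d31, d32, if_false, ite_self]
    norm_num
  have covv := hmaster _ _ hv1sum hv1sq hv2sum hv2sq hv12
  have covw := hmaster _ _ hw1sum hw1sq hw2sum hw2sq hw12
  rw [hvP] at covv
  rw [hwP] at covw
  have hP : ∑ i, η₁ i ^ 2 * η₂ i ^ 2 = ∑ i, η₁ i * η₁ i * (η₂ i * η₂ i) :=
    Finset.sum_congr rfl fun i _ => by ring
  rw [covη, covv, covw, hP]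
  ring
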